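/- Under k-Approval with fixed tie-breaking, let V be a profile with winner w and let x ≠ w. If voter i has a GS-manipulation in favour of x (a vote v' with winner(V_{-i}, v') = x and x ≻_i w), then exactly one of the following holds: (Type 1) both w and x are outside the top k positions of voter i's sincere vote v_i, and the manipulation increases x's score by 1 without decreasing w's score; or (Type 2) both w and x are within the top k positions of v_i, and the manipulation decreases w's score by 1 without increasing x's score. -/

import Mathlib

def approvalScore {C : Type*} [Fintype C] [DecidableEq C] {n : ℕ} (k : ℕ)
    (V : Fin n → C → ℕ) (c : C) : ℕ :=
  (Finset.univ.filter fun i => V i c < k).card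

def IsWinner {C : Type*} [Fintype C] [DecidableEq C] {n : ℕ} (k : ℕ)
    (V : Fin n → C → ℕ) (tb : C → ℕ) (w : C) : Prop :=
  ∀ c, c ≠ w → approvalScore k V c < approvalScore k V w ∨
    (approvalScore k V c = approvalScore k V w ∧ tb w < tb c)

open scoped Classical in
noncomputable def winner {C : Type*} [Fintype C] [DecidableEq C] [Nonempty C] {n : ℕ} (k : ℕ)
    (V : Fin n → C → ℕ) (tb : C → ℕ) : C :=
  if h : ∃ w, IsWinner k V tb w then h.choose else Classical.arbitrary C

lemma score_update {C : Type*} [Fintype C] [DecidableEq C] {n : ℕ} (k : ℕ)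
    (V : Fin n → C → ℕ) (i : Fin n) (v' : C → ℕ) (c : C) :
    approvalScore k (Function.update V i v') c + (if V i c < k then 1 else 0)
      = approvalScore k V c + (if v' c < k then 1 else 0) := by
  classical
  have h : ∀ W : Fin n → C → ℕ, approvalScore k W c
      = (∑ j ∈ Finset.univ.erase i, (if W j c < k then 1 else 0))
        + (if W i c < k then 1 else 0) := by
    intro W
    rw [approvalScore, Finset.card_filter,
      ← Finset.sum_erase_add _ _ (Finset.mem_univ i)]
  rw [h, h]
  have he : (∑ j ∈ Finset.univ.erase i,
        (if Function.update V i v' j c < k then 1 else 0))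
      = ∑ j ∈ Finset.univ.erase i, (if V j c < k then 1 else 0) := by
    refine Finset.sum_congr rfl fun j hj => ?_
    rw [Function.update_of_ne (Finset.mem_erase.1 hj).1]
  rw [he, Function.update_self]
  omega

/-- Dichotomy of GS-manipulations under k-Approval: a manipulation `v'` of
voter `i` in favour of `x ≠ w` is of exactly one of two types.
Type 1: both `w` and `x` are outside `top_k` of the sincere vote, the
manipulation raises `x`'s score by one and does not lower `w`'s score.
Type 2: both `w` and `x` are inside `top_k` of the sincere vote, the
manipulation lowers `w`'s score by one and does not raise `x`'s score. -/
theorem stmt3 {C : Type*} [Fintype C] [DecidableEq C] {n : ℕ} (k : ℕ)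
    (hk : 1 ≤ k)
    (V : Fin n → C → ℕ) (hV : ∀ i, Function.Injective (V i))
    (tb : C → ℕ) (htb : Function.Injective tb)
    (w : C) (hw : IsWinner k V tb w)
    (i : Fin n) (v' : C → ℕ) (hv' : Function.Injective v')
    (x : C) (hxw : x ≠ w)
    (hx : IsWinner k (Function.update V i v') tb x)
    (hpref : V i x < V i w) :
    Xor'
      (k ≤ V i w ∧ k ≤ V i x ∧
        approvalScore k (Function.update V i v') x = approvalScore k V x + 1 ∧
        approvalScore k V w ≤ approvalScore k (Function.update V i v') w)
      (V i w < k ∧ V i x < k ∧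
        approvalScore k (Function.update V i v') w + 1 = approvalScore k V w ∧
        approvalScore k (Function.update V i v') x ≤ approvalScore k V x) := by
  have hsx := score_update k V i v' x
  have hsw := score_update k V i v' w
  have hwx := hw x hxw
  have hxww := hx w (Ne.symm hxw)
  have hA : approvalScore k V x ≤ approvalScore k V w := by
    rcases hwx with h | ⟨h, _⟩ <;> omega
  have hB : approvalScore k (Function.update V i v') w
      ≤ approvalScore k (Function.update V i v') x := by
    rcases hxww with h | ⟨h, _⟩ <;> omega
  have hC : approvalScore k V x < approvalScore k V w ∨
      approvalScore k (Function.update V i v') w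
        < approvalScore k (Function.update V i v') x := by
    rcases hwx with h | ⟨h, ht⟩
    · exact Or.inl h
    rcases hxww with h2 | ⟨h2, ht2⟩
    · exact Or.inr h2
    · exact absurd (ht.trans ht2) (lt_irrefl _)
  unfold Xor' Xor
  by_cases c1 : V i x < k <;> by_cases c2 : V i w < k <;>
    by_cases c3 : v' x < k <;> by_cases c4 : v' w < k <;>
    simp only [c1, c2, c3, c4, if_true, if_false, if_pos, if_neg,
      not_false_iff, ite_true, ite_false] at hsx hsw <;>
    omega
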